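/- Let L be a PG-lattice and M a faithful multiplication PG-lattice L-module with I_M compact. Then for every proper element N ∈ M, (δ₁(N) : I_M) = √(N:I_M). -/

import Mathlib

open CompleteLattice

universe u v

/-- A multiplicative lattice: a complete lattice with a commutative, associative
multiplication distributing over arbitrary joins, whose top element is the
multiplicative identity. -/
class MultiplicativeLattice (L : Type u) extends CompleteLattice L, CommMonoid L where
  one_eq_top : (1 : L) = ⊤
  sSup_mul : ∀ (S : Set L) (b : L), sSup S * b = ⨆ a ∈ S, a * b

/-- A lattice module over a multiplicative lattice. -/
class LatticeModule (L : Type u) [MultiplicativeLattice L] (M : Type v)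
    extends CompleteLattice M, SMul L M where
  sSup_smul : ∀ (S : Set L) (A : M), (SupSet.sSup S : L) • A = ⨆ a ∈ S, a • A
  smul_sSup : ∀ (a : L) (S : Set M), a • sSup S = ⨆ B ∈ S, a • B
  mul_smul : ∀ (a b : L) (A : M), (a * b) • A = a • b • A
  one_smul : ∀ A : M, (1 : L) • A = A
  bot_smul : ∀ A : M, (⊥ : L) • A = (⊥ : M)

section LatticeDefs

variable {L : Type u} [MultiplicativeLattice L]

/-- The residual `(a : b)` in `L`. -/
def lColon (a b : L) : L := sSup {x : L | x * b ≤ a}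

/-- The radical `√a` of an element of `L`. -/
def radL (a : L) : L :=
  sSup {x : L | IsCompactElement x ∧ ∃ n : ℕ, 1 ≤ n ∧ x ^ n ≤ a}

/-- A principal element of a multiplicative lattice (meet principal and join principal). -/
def IsPrincipalElemL (e : L) : Prop :=
  (∀ a b : L, a ⊓ b * e = (lColon a e ⊓ b) * e) ∧
  (∀ a b : L, lColon (a * e ⊔ b) e = lColon b e ⊔ a)

/-- An expansion function on `L`. -/
def IsExpansionL (δ : L → L) : Prop :=
  (∀ a : L, a ≤ δ a) ∧ ∀ a b : L, a ≤ b → δ a ≤ δ b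

/-- A 2-absorbing element of `L`. -/
def Is2AbsorbingL (q : L) : Prop :=
  q < ⊤ ∧ ∀ a b c : L, a * b * c ≤ q → a * b ≤ q ∨ b * c ≤ q ∨ c * a ≤ q

/-- A 2-absorbing primary element of `L`. -/
def Is2AbsorbingPrimaryL (q : L) : Prop :=
  q < ⊤ ∧ ∀ a b c : L, a * b * c ≤ q → a * b ≤ q ∨ b * c ≤ radL q ∨ c * a ≤ radL q

/-- A `δL`-primary element of `L`. -/
def IsDeltaLPrimaryL (δL : L → L) (p : L) : Prop :=
  p < ⊤ ∧ ∀ a b : L, a * b ≤ p → a ≤ p ∨ b ≤ δL p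

end LatticeDefs

/-- `L` is a PG-lattice: every element is a join of principal elements. -/
def IsPGLattice (L : Type u) [MultiplicativeLattice L] : Prop :=
  ∀ a : L, a = sSup {e : L | IsPrincipalElemL e ∧ e ≤ a}

section ModuleDefs

variable (L : Type u) {M : Type v} [MultiplicativeLattice L] [LatticeModule L M]

/-- The element `(A : B)` of `L`, for `A B : M`. -/
def mColon (A B : M) : L := sSup {x : L | x • B ≤ A}

/-- The element `(N : a)` of `M`, for `N : M`, `a : L`. -/
def resColon (N : M) (a : L) : M := sSup {X : M | a • X ≤ N}

/-- An expansion function on the `L`-module `M`. -/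
def IsExpansionM (δ : M → M) : Prop :=
  (∀ A : M, A ≤ δ A) ∧ ∀ A B : M, A ≤ B → δ A ≤ δ B

/-- A `δ`-primary element of the `L`-module `M`. -/
def IsDeltaPrimaryM (δ : M → M) (P : M) : Prop :=
  P < ⊤ ∧ ∀ (a : L) (A : M), a • A ≤ P → A ≤ P ∨ a • (⊤ : M) ≤ δ P

/-- A prime element of the `L`-module `M`. -/
def IsPrimeM (P : M) : Prop :=
  P < ⊤ ∧ ∀ (a : L) (A : M), a • A ≤ P → A ≤ P ∨ a • (⊤ : M) ≤ P

/-- A primary element of the `L`-module `M`. -/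
def IsPrimaryM (P : M) : Prop :=
  P < ⊤ ∧ ∀ (a : L) (A : M), a • A ≤ P → A ≤ P ∨ ∃ n : ℕ, 1 ≤ n ∧ a ^ n • (⊤ : M) ≤ P

/-- A principal element of the `L`-module `M` (meet principal and join principal). -/
def IsPrincipalElemM (N : M) : Prop :=
  (∀ (b : L) (B : M), (b ⊓ mColon L B N) • N = b • N ⊓ B) ∧
  (∀ (b : L) (B : M), b ⊔ mColon L B N = mColon L (b • N ⊔ B) N)

/-- A maximal element of the `L`-module `M`. -/
def IsMaximalM (H : M) : Prop :=
  H < ⊤ ∧ ∀ B : M, H ≤ B → B = H ∨ B = ⊤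

/-- A meet prime element of the `L`-module `M`. -/
def IsMeetPrimeM (N : M) : Prop :=
  N < ⊤ ∧ ∀ A B : M, A ⊓ B ≤ N → A ≤ N ∨ B ≤ N

/-- The expansion function `δ₁` on a multiplication `L`-module `M`:
`δ₁(A) = (√(A : I_M)) I_M`. -/
def delta1 (A : M) : M := radL (mColon L A (⊤ : M)) • (⊤ : M)

/-- The expansion function `δ₂`: meet of all maximal elements above a proper element. -/
noncomputable def delta2 (A : M) : M := by
  classical exact if A = ⊤ then ⊤ else sInf {H : M | A ≤ H ∧ IsMaximalM L H}

/-- A 2-absorbing primary element of the `L`-module `M`. -/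
def Is2AbsorbingPrimaryM (Q : M) : Prop :=
  Q < ⊤ ∧ ∀ (a b : L) (N : M), (a * b) • N ≤ Q →
    a * b ≤ mColon L Q (⊤ : M) ∨
    b • N ≤ radL (mColon L Q (⊤ : M)) • (⊤ : M) ∨
    a • N ≤ radL (mColon L Q (⊤ : M)) • (⊤ : M)

/-- A `δL`-primary element of the `L`-module `M`, for an expansion function `δL` on `L`. -/
def IsDeltaLPrimaryM (δL : L → L) (P : M) : Prop :=
  P < ⊤ ∧ ∀ (a : L) (A : M), a • A ≤ P → A ≤ P ∨ a ≤ δL (mColon L P (⊤ : M))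

end ModuleDefs

/-- `M` is a PG-lattice `L`-module: every element is a join of principal elements. -/
def IsPGModule (L : Type u) (M : Type v) [MultiplicativeLattice L] [LatticeModule L M] : Prop :=
  ∀ N : M, N = sSup {E : M | IsPrincipalElemM L E ∧ E ≤ N}

/-- `M` is a multiplication `L`-module. -/
def IsMultiplicationModule (L : Type u) (M : Type v)
    [MultiplicativeLattice L] [LatticeModule L M] : Prop :=
  ∀ N : M, ∃ a : L, N = a • (⊤ : M)

/-- `M` is a faithful `L`-module: `(O_M : I_M) = 0`. -/
def IsFaithfulModule (L : Type u) (M : Type v)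
    [MultiplicativeLattice L] [LatticeModule L M] : Prop :=
  mColon L (⊥ : M) (⊤ : M) = (⊥ : L)

section Aux

variable {L : Type u} {M : Type v} [MultiplicativeLattice L] [LatticeModule L M]

lemma aux_one_top : (1 : L) = ⊤ := MultiplicativeLattice.one_eq_top

lemma aux_sup_mul (a b c : L) : (a ⊔ b) * c = a * c ⊔ b * c := by
  have := MultiplicativeLattice.sSup_mul ({a, b} : Set L) c
  rw [sSup_pair] at this
  rw [this, iSup_pair]

lemma aux_mul_le_mul_right {a b : L} (h : a ≤ b) (c : L) : a * c ≤ b * c := by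
  have : (a ⊔ b) * c = a * c ⊔ b * c := aux_sup_mul a b c
  rw [sup_eq_right.mpr h] at this
  rw [this]; exact le_sup_left

lemma aux_mul_le_left (a b : L) : a * b ≤ a := by
  have := aux_mul_le_mul_right (le_top : b ≤ (⊤ : L)) a
  rw [← aux_one_top, one_mul] at this
  rw [mul_comm]; exact this

lemma aux_mul_le_right (a b : L) : a * b ≤ b := by
  rw [mul_comm]; exact aux_mul_le_left b a

lemma aux_sup_smul (a b : L) (X : M) : (a ⊔ b) • X = a • X ⊔ b • X := by
  have := LatticeModule.sSup_smul ({a, b} : Set L) X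
  rw [sSup_pair] at this
  rw [this, iSup_pair]

lemma aux_smul_sup (a : L) (X Y : M) : a • (X ⊔ Y) = a • X ⊔ a • Y := by
  have := LatticeModule.smul_sSup a ({X, Y} : Set M)
  rw [sSup_pair] at this
  rw [this, iSup_pair]

lemma aux_smul_mono_left {a b : L} (h : a ≤ b) (X : M) : a • X ≤ b • X := by
  have : (a ⊔ b) • X = a • X ⊔ b • X := aux_sup_smul a b X
  rw [sup_eq_right.mpr h] at this
  rw [this]; exact le_sup_left

lemma aux_smul_mono_right (a : L) {X Y : M} (h : X ≤ Y) : a • X ≤ a • Y := by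
  have : a • (X ⊔ Y) = a • X ⊔ a • Y := aux_smul_sup a X Y
  rw [sup_eq_right.mpr h] at this
  rw [this]; exact le_sup_left

lemma aux_one_smul (X : M) : (1 : L) • X = X := LatticeModule.one_smul X

lemma aux_top_smul (X : M) : (⊤ : L) • X = X := by
  rw [← aux_one_top]; exact aux_one_smul X

lemma aux_smul_le_self (a : L) (X : M) : a • X ≤ X := by
  have := aux_smul_mono_left (le_top : a ≤ (⊤ : L)) X
  rwa [aux_top_smul] at this

lemma aux_smul_bot (a : L) : a • (⊥ : M) = ⊥ := by
  have := LatticeModule.smul_sSup a (∅ : Set M)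
  simpa using this

lemma aux_mul_smul (a b : L) (X : M) : (a * b) • X = a • b • X :=
  LatticeModule.mul_smul a b X

lemma aux_le_mColon {x : L} {A B : M} (h : x • B ≤ A) : x ≤ mColon L A B :=
  le_sSup h

lemma aux_mColon_smul (A B : M) : mColon L A B • B ≤ A := by
  unfold mColon
  rw [LatticeModule.sSup_smul]
  exact iSup_le fun a => iSup_le fun ha => ha

/-- A coatom of `L` is prime. -/
lemma aux_coatom_prime {p a b : L} (hp : IsCoatom p) (hab : a * b ≤ p) (ha : ¬ a ≤ p) :
    b ≤ p := by
  have hsup : p ⊔ a = ⊤ := hp.2 _ (lt_of_le_of_ne le_sup_left (by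
    intro h; exact ha (h ▸ le_sup_right)))
  have : b = (p ⊔ a) * b := by rw [hsup, ← aux_one_top, one_mul]
  rw [this, aux_sup_mul]
  exact sup_le (aux_mul_le_left p b) hab

/-- Combination step: if `1 ≤ a ⊔ (C : E)` for each `E ∈ F`, then
`1 ≤ a ⊔ (C : sup F)`. -/
lemma aux_combine (F : Finset M) (a : L) (C : M)
    (h : ∀ E ∈ F, (1 : L) ≤ a ⊔ mColon L C E) :
    (1 : L) ≤ a ⊔ mColon L C (F.sup id) := by
  classical
  induction F using Finset.induction_on with
  | empty =>
      refine le_trans ?_ le_sup_right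
      exact aux_le_mColon (by rw [Finset.sup_empty, aux_smul_bot]; exact bot_le)
  | @insert E G hEG IH =>
      have hE : (1 : L) ≤ a ⊔ mColon L C E := h E (Finset.mem_insert_self E G)
      have hG : (1 : L) ≤ a ⊔ mColon L C (G.sup id) :=
        IH fun E' hE' => h E' (Finset.mem_insert_of_mem hE')
      set u := mColon L C E
      set v := mColon L C (G.sup id)
      have huv : u * v ≤ a ⊔ mColon L C ((insert E G).sup id) := by
        refine le_trans ?_ le_sup_right
        apply aux_le_mColon
        rw [Finset.sup_insert]
        show (u * v) • (id E ⊔ G.sup id) ≤ C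
        rw [aux_smul_sup]
        refine sup_le ?_ ?_
        · calc (u * v) • (id E) ≤ u • E := aux_smul_mono_left (aux_mul_le_left u v) E
            _ ≤ C := aux_mColon_smul C E
        · calc (u * v) • (G.sup id) ≤ v • (G.sup id) :=
              aux_smul_mono_left (aux_mul_le_right u v) _
            _ ≤ C := aux_mColon_smul C _
      calc (1 : L) = 1 * 1 := (one_mul 1).symm
        _ ≤ (a ⊔ u) * (a ⊔ v) := by
            refine le_trans (aux_mul_le_mul_right hE 1) ?_
            rw [mul_comm, mul_comm (a ⊔ u) (a ⊔ v)]
            exact aux_mul_le_mul_right hG (a ⊔ u)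
        _ = a * (a ⊔ v) ⊔ u * (a ⊔ v) := aux_sup_mul a u (a ⊔ v)
        _ ≤ a ⊔ (a ⊔ mColon L C ((insert E G).sup id)) := by
            refine sup_le (le_trans (aux_mul_le_left a (a ⊔ v)) le_sup_left) ?_
            rw [mul_comm, aux_sup_mul]
            refine sup_le (le_trans (aux_mul_le_left a u) le_sup_left) ?_
            rw [mul_comm]
            exact le_trans huv le_sup_right
        _ = a ⊔ mColon L C ((insert E G).sup id) := by rw [← sup_assoc, sup_idem]

/-- Per-element Nakayama step. -/
lemma aux_nak_elem : ∀ (n : ℕ) (F : Finset M), F.card = n →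
    (∀ E ∈ F, IsPrincipalElemM L E) → ∀ (a : L) (C : M),
    F.sup id ≤ a • F.sup id ⊔ C → ∀ E ∈ F, (1 : L) ≤ a ⊔ mColon L C E := by
  classical
  intro n
  induction n with
  | zero =>
      intro F hF _ a C _ E hE
      rw [Finset.card_eq_zero] at hF
      subst hF; exact absurd hE (by simp)
  | succ n IH =>
      intro F hF hprinc a C hle E hE
      set F' := F.erase E with hF'
      set B := F'.sup id with hB
      set I := F.sup id with hI
      have hIEB : I = E ⊔ B := by
        rw [hI, ← Finset.insert_erase hE, Finset.sup_insert]; rfl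
      have hcard : F'.card = n := by
        rw [hF', Finset.card_erase_of_mem hE, hF]; rfl
      have hprinc' : ∀ E' ∈ F', IsPrincipalElemM L E' :=
        fun E' hE' => hprinc E' (Finset.mem_of_mem_erase hE')
      -- B ≤ a • B ⊔ (a • E ⊔ C)
      have hBle : B ≤ a • B ⊔ (a • E ⊔ C) := by
        have h1 : B ≤ I := by rw [hIEB]; exact le_sup_right
        have h2 : a • I = a • E ⊔ a • B := by rw [hIEB, aux_smul_sup]
        calc B ≤ a • I ⊔ C := le_trans h1 hle
          _ = a • B ⊔ (a • E ⊔ C) := by rw [h2]; ac_rfl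
      -- apply IH + combine on F'
      have hnak : (1 : L) ≤ a ⊔ mColon L (a • E ⊔ C) B :=
        aux_combine F' a (a • E ⊔ C)
          (IH F' hcard hprinc' a (a • E ⊔ C) hBle)
      set t := mColon L (a • E ⊔ C) B with ht
      have htB : t • B ≤ a • E ⊔ C := aux_mColon_smul _ _
      have htC : t • C ≤ C := aux_smul_le_self t C
      -- t • E ≤ (a*t ⊔ a*a) • E ⊔ C
      have hkey : t • E ≤ (a * t ⊔ a * a) • E ⊔ C := by
        have hEI : E ≤ I := by rw [hIEB]; exact le_sup_left
        have h1 : t • E ≤ t • (a • I) ⊔ t • C := by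
          calc t • E ≤ t • (a • I ⊔ C) :=
                aux_smul_mono_right t (le_trans hEI hle)
            _ = t • (a • I) ⊔ t • C := aux_smul_sup t _ _
        have h2 : t • (a • I) ≤ (a * t) • E ⊔ ((a * a) • E ⊔ C) := by
          have : t • (a • I) = a • (t • E) ⊔ a • (t • B) := by
            rw [← aux_mul_smul, mul_comm t a, aux_mul_smul, hIEB, aux_smul_sup,
              aux_smul_sup]
          rw [this]
          refine sup_le ?_ ?_
          · rw [← aux_mul_smul]; exact le_sup_left
          · refine le_trans ?_ le_sup_right
            calc a • (t • B) ≤ a • (a • E ⊔ C) := aux_smul_mono_right a htB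
              _ = a • (a • E) ⊔ a • C := aux_smul_sup a _ _
              _ ≤ (a * a) • E ⊔ C := by
                  refine sup_le ?_ ?_
                  · rw [← aux_mul_smul]; exact le_sup_left
                  · exact le_trans (aux_smul_le_self a C) le_sup_right
        calc t • E ≤ t • (a • I) ⊔ t • C := h1
          _ ≤ (a * t) • E ⊔ ((a * a) • E ⊔ C) :=
              sup_le h2 (le_trans htC (le_trans le_sup_right le_sup_right))
          _ = (a * t ⊔ a * a) • E ⊔ C := by rw [aux_sup_smul, sup_assoc]
      -- join principal property of E
      have hjp := (hprinc E hE).2 (a * t ⊔ a * a) C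
      have htle : t ≤ (a * t ⊔ a * a) ⊔ mColon L C E := by
        rw [hjp]; exact aux_le_mColon hkey
      have htle2 : t ≤ a ⊔ mColon L C E := by
        refine le_trans htle (sup_le (sup_le ?_ ?_) le_sup_right)
        · exact le_trans (aux_mul_le_left a t) le_sup_left
        · exact le_trans (aux_mul_le_left a a) le_sup_left
      calc (1 : L) ≤ a ⊔ t := hnak
        _ ≤ a ⊔ (a ⊔ mColon L C E) := sup_le_sup_left htle2 a
        _ = a ⊔ mColon L C E := by rw [← sup_assoc, sup_idem]

/-- Nakayama for lattice modules: if `I = sup F` with all elements of `F`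
principal and `I ≤ a•I ⊔ C`, then `1 ≤ a ⊔ (C : I)`. -/
lemma aux_nakayama (F : Finset M) (hprinc : ∀ E ∈ F, IsPrincipalElemM L E)
    (a : L) (C : M) (hle : F.sup id ≤ a • F.sup id ⊔ C) :
    (1 : L) ≤ a ⊔ mColon L C (F.sup id) :=
  aux_combine F a C (aux_nak_elem F.card F rfl hprinc a C hle)

/-- Cancellation: in a faithful multiplication PG lattice module with compact top,
`x • ⊤ ≤ b • ⊤` implies `x ≤ b`. -/
lemma aux_cancel (h1cpt : IsCompactElement (1 : L)) (hPGM : IsPGModule L M)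
    (hmult : IsMultiplicationModule L M) (hfaith : IsFaithfulModule L M)
    (htop : IsCompactElement (⊤ : M)) (b x : L)
    (hx : x • (⊤ : M) ≤ b • (⊤ : M)) : x ≤ b := by
  classical
  -- decompose ⊤ as a finite sup of principal elements
  obtain ⟨F, hFsub, hFtop⟩ := (isCompactElement_iff_exists_le_sSup_of_le_sSup M _).mp htop {E : M | IsPrincipalElemM L E ∧ E ≤ ⊤}
    (le_of_eq (hPGM ⊤))
  have hFsup : F.sup id = (⊤ : M) := le_antisymm le_top hFtop
  have hFprinc : ∀ E ∈ F, IsPrincipalElemM L E := fun E hE => (hFsub hE).1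
  set t := sSup {z : L | z * x ≤ b} with ht
  have httop : t = ⊤ := by
    by_contra hne
    have : IsCoatomic L := CompleteLattice.coatomic_of_top_compact
      (by rw [← aux_one_top]; exact h1cpt)
    obtain ⟨p, hp, htp⟩ := (this.eq_top_or_exists_le_coatom t).resolve_left hne
    by_cases hcase : ∀ E ∈ F, mColon L E (⊤ : M) ≤ p
    · -- case 1 : ⊤ = p • ⊤, contradiction with Nakayama + faithfulness
      have hsub : F.sup id ≤ p • F.sup id ⊔ (⊥ : M) := by
        rw [hFsup, sup_bot_eq]
        rw [← hFsup]
        refine Finset.sup_le fun E hE => ?_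
        obtain ⟨aE, haE⟩ := hmult E
        have h1 : aE ≤ mColon L E (⊤ : M) := aux_le_mColon (le_of_eq haE.symm)
        calc (id E : M) = aE • (⊤ : M) := haE
          _ ≤ mColon L E (⊤ : M) • (⊤ : M) := aux_smul_mono_left h1 _
          _ ≤ p • (⊤ : M) := aux_smul_mono_left (hcase E hE) _
          _ = p • F.sup id := by rw [hFsup]
      have hnak := aux_nakayama F hFprinc p (⊥ : M) hsub
      rw [hFsup, hfaith, sup_bot_eq, aux_one_top] at hnak
      exact hp.1 (le_antisymm le_top hnak)
    · -- case 2 : q • ⊤ ≤ E with q = (E : ⊤) ≰ p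
      push_neg at hcase
      obtain ⟨E, hEF, hq⟩ := hcase
      set q := mColon L E (⊤ : M) with hqdef
      have hqtop : q • (⊤ : M) ≤ E := aux_mColon_smul E ⊤
      have hEprinc := hFprinc E hEF
      -- (q*x) • E ≤ b • E
      have h1 : (q * x) • E ≤ b • E := by
        calc (q * x) • E ≤ (q * x) • (⊤ : M) := aux_smul_mono_right _ le_top
          _ = q • (x • (⊤ : M)) := aux_mul_smul q x ⊤
          _ ≤ q • (b • (⊤ : M)) := aux_smul_mono_right q hx
          _ = b • (q • (⊤ : M)) := by rw [← aux_mul_smul, mul_comm, aux_mul_smul]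
          _ ≤ b • E := aux_smul_mono_right b hqtop
      -- join principal: q*x ≤ b ⊔ (⊥ : E)
      have hjp := hEprinc.2 b (⊥ : M)
      rw [sup_bot_eq] at hjp
      have h2 : q * x ≤ b ⊔ mColon L (⊥ : M) E := by
        rw [hjp]; exact aux_le_mColon h1
      -- multiply by q again
      have h3 : q * mColon L (⊥ : M) E ≤ (⊥ : L) := by
        rw [← hfaith]
        apply aux_le_mColon
        calc (q * mColon L (⊥ : M) E) • (⊤ : M)
            = mColon L (⊥ : M) E • (q • (⊤ : M)) := by
              rw [← aux_mul_smul, mul_comm q _]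
          _ ≤ mColon L (⊥ : M) E • E := aux_smul_mono_right _ hqtop
          _ ≤ (⊥ : M) := aux_mColon_smul _ _
      have h4 : q * (q * x) ≤ b := by
        calc q * (q * x) ≤ q * (b ⊔ mColon L (⊥ : M) E) := by
              rw [mul_comm q (q * x), mul_comm q (b ⊔ _)]
              exact aux_mul_le_mul_right h2 q
          _ = b * q ⊔ mColon L (⊥ : M) E * q := by rw [mul_comm, aux_sup_mul]
          _ ≤ b ⊔ (⊥ : L) := by
              refine sup_le (le_trans (aux_mul_le_left b q) le_sup_left) ?_
              rw [mul_comm]; exact le_trans h3 le_sup_right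
          _ = b := sup_bot_eq b
      have h5 : q * q ≤ t := by
        apply _root_.le_sSup
        show (q * q) * x ≤ b
        rw [mul_assoc]; exact h4
      have h6 : q * q ≤ p := le_trans h5 htp
      exact hq (aux_coatom_prime hp h6 (fun hqp => hq hqp))
  -- t = ⊤ and 1 compact : conclude x ≤ b
  have h1le : (1 : L) ≤ sSup {z : L | z * x ≤ b} := by rw [← ht, httop, aux_one_top]
  obtain ⟨G, hGsub, hGle⟩ := (isCompactElement_iff_exists_le_sSup_of_le_sSup L _).mp h1cpt {z : L | z * x ≤ b} h1le
  have hGx : G.sup id * x ≤ b := by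
    rw [Finset.sup_id_eq_sSup, MultiplicativeLattice.sSup_mul]
    exact iSup_le fun z => iSup_le fun hz => hGsub hz
  calc x = 1 * x := (one_mul x).symm
    _ ≤ G.sup id * x := aux_mul_le_mul_right hGle x
    _ ≤ b := hGx

end Aux

theorem stmt18 {L : Type u} {M : Type v} [MultiplicativeLattice L] [LatticeModule L M]
    [IsCompactlyGenerated L]
    (h1cpt : IsCompactElement (1 : L))
    (hmulcpt : ∀ a b : L, IsCompactElement a → IsCompactElement b → IsCompactElement (a * b))
    (hPGL : IsPGLattice L) (hPGM : IsPGModule L M)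
    (hmult : IsMultiplicationModule L M) (hfaith : IsFaithfulModule L M)
    (htop : IsCompactElement (⊤ : M))
    (N : M) (hN : N < ⊤) :
    mColon L (delta1 L N) (⊤ : M) = radL (mColon L N (⊤ : M)) := by
  set r := radL (mColon L N (⊤ : M)) with hr
  have hdelta : delta1 L N = r • (⊤ : M) := rfl
  apply le_antisymm
  · rw [hdelta]
    refine sSup_le fun x hx => ?_
    exact aux_cancel h1cpt hPGM hmult hfaith htop r x hx
  · exact aux_le_mColon (le_of_eq hdelta.symm)
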